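/- Suppose f is μ-strongly convex, differentiable, with minimizer x*, and the Catalyst iteration produces x^{k+1} as an exact minimizer of x ↦ f(x) + (L/2)‖x − x^k‖₂². Then f(x^{k+1}) − f(x*) ≤ (L/(L+μ))·(f(x^k) − f(x*)). -/

import Mathlib

/-- Linear convergence of the exact proximal-point (Catalyst outer) step. -/
theorem catalyst_outer_step {n : ℕ} (f : EuclideanSpace ℝ (Fin n) → ℝ)
    (μ L : ℝ) (hμ : 0 < μ) (hL : 0 < L)
    (hf : StrongConvexOn Set.univ μ f) (hfd : Differentiable ℝ f)
    (xstar : EuclideanSpace ℝ (Fin n)) (hmin : ∀ y, f xstar ≤ f y)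
    (xk xk1 : EuclideanSpace ℝ (Fin n))
    (hprox : ∀ x, f xk1 + L / 2 * ‖xk1 - xk‖ ^ 2 ≤ f x + L / 2 * ‖x - xk‖ ^ 2) :
    f xk1 - f xstar ≤ L / (L + μ) * (f xk - f xstar) := by
  have hLμ : 0 < L + μ := by linarith
  set b : ℝ := μ / (L + μ) with hb_def
  set a : ℝ := L / (L + μ) with ha_def
  have hb : 0 ≤ b := by positivity
  have ha : 0 ≤ a := by positivity
  have hab : a + b = 1 := by rw [ha_def, hb_def]; field_simp
  have hsc : f (a • xk + b • xstar) ≤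
      a * f xk + b * f xstar - a * b * (μ / 2 * ‖xk - xstar‖ ^ 2) := by
    simpa [smul_eq_mul] using hf.2 (Set.mem_univ xk) (Set.mem_univ xstar) ha hb hab
  have hx := hprox (a • xk + b • xstar)
  have key : a • xk + b • xstar - xk = b • (xstar - xk) := by
    have h1 : a = 1 - b := by linarith
    rw [h1]; module
  have hnorm : ‖a • xk + b • xstar - xk‖ ^ 2 = b ^ 2 * ‖xstar - xk‖ ^ 2 := by
    rw [key, norm_smul, Real.norm_eq_abs, abs_of_nonneg hb, mul_pow]
  rw [hnorm] at hx
  have hnn : 0 ≤ L / 2 * ‖xk1 - xk‖ ^ 2 := by positivity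
  have hrev : ‖xk - xstar‖ = ‖xstar - xk‖ := norm_sub_rev _ _
  have hcancel : L / 2 * (b ^ 2 * ‖xstar - xk‖ ^ 2)
      = a * b * (μ / 2 * ‖xk - xstar‖ ^ 2) := by
    rw [hrev, ha_def, hb_def]
    field_simp
  have habf : a * f xstar + b * f xstar = f xstar := by rw [← add_mul, hab, one_mul]
  nlinarith [hsc, hx, hnn, hcancel, habf]
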